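/- Let α > 0. Then the sequence of exceptional zeros of the X₁-Laguerre polynomials is strictly increasing and bounded above by −α; that is, x̂_{n,1}^{(α)} < x̂_{n+1,1}^{(α)} < −α for every n ≥ 1, so that −(α+1) = x̂_{1,1}^{(α)} < … < x̂_{n−1,1}^{(α)} < x̂_{n,1}^{(α)} < … < −α. -/

import Mathlib

open Finset Filter

/-- The Jacobi polynomial `P_n^{(α,β)}(x)` via its explicit sum representation. -/
noncomputable def jacobiP (α β : ℝ) (n : ℕ) (x : ℝ) : ℝ :=
  ∑ s ∈ Finset.range (n + 1),
    ((∏ j ∈ Finset.Icc (s + 1) n, (α + (j : ℝ))) / (Nat.factorial (n - s) : ℝ)) *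
      ((∏ j ∈ Finset.Icc (n - s + 1) n, (β + (j : ℝ))) / (Nat.factorial s : ℝ)) *
      ((x - 1) / 2) ^ s * ((x + 1) / 2) ^ (n - s)

/-- The X₁-Jacobi polynomial `P̂_n^{(α,β)}(x)` for `n ≥ 1`, with `b = (β+α)/(β-α)`. -/
noncomputable def X1jacobiP (α β : ℝ) (n : ℕ) (x : ℝ) : ℝ :=
  -(1 / 2) * (x - (β + α) / (β - α)) * jacobiP α β (n - 1) x +
    ((β + α) / (β - α) * jacobiP α β (n - 1) x -
        (if 2 ≤ n then jacobiP α β (n - 2) x else 0)) / (2 * (n : ℝ) - 2 + α + β)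

/-- The generalized Laguerre polynomial `L_n^{(α)}(x)` via its explicit sum representation. -/
noncomputable def laguerreL (α : ℝ) (n : ℕ) (x : ℝ) : ℝ :=
  ∑ k ∈ Finset.range (n + 1),
    (-1 : ℝ) ^ k / (Nat.factorial k : ℝ) *
      ((∏ j ∈ Finset.Icc (k + 1) n, (α + (j : ℝ))) / (Nat.factorial (n - k) : ℝ)) * x ^ k

/-- The X₁-Laguerre polynomial `L̂_n^{(α)}(x)` for `n ≥ 1`. -/
noncomputable def X1laguerreL (α : ℝ) (n : ℕ) (x : ℝ) : ℝ :=
  -(x + α + 1) * laguerreL α (n - 1) x + (if 2 ≤ n then laguerreL α (n - 2) x else 0)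

/-- The physicist's Hermite polynomial `H_m(x)`. -/
noncomputable def hermiteH (m : ℕ) (x : ℝ) : ℝ :=
  (Nat.factorial m : ℝ) *
    ∑ j ∈ Finset.range (m / 2 + 1),
      (-1 : ℝ) ^ j / ((Nat.factorial j : ℝ) * (Nat.factorial (m - 2 * j) : ℝ)) *
        (2 * x) ^ (m - 2 * j)

/-- `z 1 < z 2 < … < z n` enumerates, in increasing order, all real zeros of `f`. -/
def EnumZeros (f : ℝ → ℝ) (n : ℕ) (z : ℕ → ℝ) : Prop :=
  StrictMonoOn z (Set.Icc 1 n) ∧ ∀ x : ℝ, f x = 0 ↔ ∃ k, 1 ≤ k ∧ k ≤ n ∧ x = z k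


noncomputable def Lcoef (α : ℝ) (n k : ℕ) : ℝ :=
  if k ≤ n then
    (-1 : ℝ) ^ k / (Nat.factorial k : ℝ) *
      ((∏ j ∈ Finset.Icc (k + 1) n, (α + (j : ℝ))) / (Nat.factorial (n - k) : ℝ))
  else 0

lemma lag_eq_sum (α x : ℝ) (n m : ℕ) (h : n < m) :
    laguerreL α n x = ∑ k ∈ range m, Lcoef α n k * x ^ k := by
  rw [laguerreL, ← Finset.sum_subset (Finset.range_subset_range.mpr h)]
  · apply Finset.sum_congr rfl
    intro k hk
    rw [Finset.mem_range] at hk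
    rw [Lcoef, if_pos (by omega)]
  · intro k _ hk
    rw [Finset.mem_range, not_lt] at hk
    rw [Lcoef, if_neg (by omega), zero_mul]

lemma prod_Icc_to_range (α : ℝ) (a m : ℕ) :
    ∏ j ∈ Finset.Icc (a + 1) m, (α + (j : ℝ)) =
      ∏ i ∈ Finset.range (m - a), (α + ((a + 1 + i : ℕ) : ℝ)) := by
  rw [← Finset.Ico_add_one_right_eq_Icc, Finset.prod_Ico_eq_prod_range]
  have : m + 1 - (a + 1) = m - a := by omega
  rw [this]

lemma coef_rec (α : ℝ) (n k : ℕ) :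
    ((n:ℝ)+2) * Lcoef α (n+2) k + (if k = 0 then 0 else Lcoef α (n+1) (k-1))
      + ((n:ℝ)+1+α) * Lcoef α n k = (2*(n:ℝ)+3+α) * Lcoef α (n+1) k := by
  rcases Nat.lt_or_ge n k with hk | hk
  · rcases Nat.lt_or_ge (n+2) k with hk2 | hk2
    · -- k ≥ n+3 : all coefficients vanish
      simp only [Lcoef]
      split_ifs <;> first | omega | contradiction | ring
    rcases Nat.eq_or_lt_of_le hk2 with hk3 | hk3
    · -- k = n+2
      subst hk3
      simp only [Lcoef, (by omega : n + 2 - 1 = n + 1), (by omega : n + 2 - (n + 2) = 0),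
        (by omega : n + 1 - (n + 1) = 0)]
      split_ifs <;> first | omega | contradiction | skip
      rw [Finset.Icc_eq_empty_of_lt (by omega : n + 2 < n + 2 + 1),
        Finset.Icc_eq_empty_of_lt (by omega : n + 1 < n + 1 + 1), Finset.prod_empty]
      have h1 : ((-1:ℝ))^(n+2) = -(-1:ℝ)^(n+1) := by ring
      have h2 : ((Nat.factorial (n+2) : ℕ) : ℝ) = ((n:ℝ)+2) * (Nat.factorial (n+1) : ℝ) := by
        rw [Nat.factorial_succ]; push_cast; ring
      rw [h1, h2]
      have h3 : ((Nat.factorial (n+1) : ℕ):ℝ) ≠ 0 := by positivity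
      field_simp
      ring
    · -- k = n+1
      have hk4 : k = n + 1 := by omega
      subst hk4
      simp only [Lcoef, (by omega : n + 1 - 1 = n), (by omega : n + 1 - (n + 1) = 0),
        (by omega : n + 2 - (n + 1) = 1), (by omega : n + 1 - n = 1)]
      split_ifs <;> first | omega | contradiction | skip
      rw [(by omega : n + 1 + 1 = n + 2), Finset.Icc_self, Finset.prod_singleton,
        Finset.Icc_eq_empty_of_lt (by omega : n + 1 < n + 2), Finset.prod_empty,
        Finset.Icc_self, Finset.prod_singleton]
      have h1 : ((-1:ℝ))^(n+1) = -(-1:ℝ)^n := by ring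
      have h2 : ((Nat.factorial (n+1) : ℕ) : ℝ) = ((n:ℝ)+1) * (Nat.factorial n : ℝ) := by
        rw [Nat.factorial_succ]; push_cast; ring
      rw [h1, h2]
      have h3 : ((Nat.factorial n : ℕ):ℝ) ≠ 0 := by positivity
      have h4 : ((Nat.factorial 1 : ℕ):ℝ) = 1 := by norm_num
      rw [h4]
      push_cast
      field_simp
      ring
  · -- k ≤ n : main case
    obtain ⟨m, hm⟩ : ∃ m, n = m + k := ⟨n - k, by omega⟩
    subst hm
    rcases Nat.eq_zero_or_pos k with hk0 | hk0
    · subst hk0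
      simp only [Lcoef, Nat.add_zero, Nat.sub_zero, if_pos rfl]
      split_ifs <;> first | omega | contradiction | skip
      rw [prod_Icc_to_range α 0 (m+2), prod_Icc_to_range α 0 (m+1), prod_Icc_to_range α 0 m,
        (by omega : m + 2 - 0 = m + 2), (by omega : m + 1 - 0 = m + 1), (by omega : m - 0 = m)]
      have hP2 : ∏ i ∈ Finset.range (m+2), (α + ((0 + 1 + i : ℕ) : ℝ)) =
          ((∏ i ∈ Finset.range m, (α + ((0 + 1 + i : ℕ) : ℝ))) * (α + ((m:ℝ) + 1)))
            * (α + ((m:ℝ) + 2)) := by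
        rw [Finset.prod_range_succ, Finset.prod_range_succ]; push_cast; ring
      have hP1 : ∏ i ∈ Finset.range (m+1), (α + ((0 + 1 + i : ℕ) : ℝ)) =
          (∏ i ∈ Finset.range m, (α + ((0 + 1 + i : ℕ) : ℝ))) * (α + ((m:ℝ) + 1)) := by
        rw [Finset.prod_range_succ]; push_cast; ring
      rw [hP2, hP1]
      have hfac2 : ((Nat.factorial (m+2) : ℕ) : ℝ)
          = ((m:ℝ)+2) * (((m:ℝ)+1) * (Nat.factorial m : ℝ)) := by
        rw [Nat.factorial_succ, Nat.factorial_succ]; push_cast; ring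
      have hfac1 : ((Nat.factorial (m+1) : ℕ) : ℝ) = ((m:ℝ)+1) * (Nat.factorial m : ℝ) := by
        rw [Nat.factorial_succ]; push_cast; ring
      rw [hfac2, hfac1]
      have hm0 : ((Nat.factorial m : ℕ):ℝ) ≠ 0 := by positivity
      field_simp
      ring
    · obtain ⟨t, ht⟩ : ∃ t, k = t + 1 := ⟨k - 1, by omega⟩
      subst ht
      simp only [Lcoef, (by omega : t + 1 - 1 = t),
        (by omega : m + (t+1) + 2 - (t+1) = m + 2), (by omega : m + (t+1) + 1 - (t+1) = m + 1),
        (by omega : m + (t+1) - (t+1) = m), (by omega : m + (t+1) + 1 - t = m + 2)]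
      split_ifs <;> first | omega | contradiction | skip
      rw [prod_Icc_to_range α (t+1) (m+(t+1)+2), prod_Icc_to_range α (t+1) (m+(t+1)+1),
        prod_Icc_to_range α (t+1) (m+(t+1)), prod_Icc_to_range α t (m+(t+1)+1),
        (by omega : m + (t+1) + 2 - (t+1) = m + 2), (by omega : m + (t+1) + 1 - (t+1) = m + 1),
        (by omega : m + (t+1) - (t+1) = m), (by omega : m + (t+1) + 1 - t = m + 2)]
      have hB : ∏ i ∈ Finset.range (m+2), (α + ((t + 1 + i : ℕ) : ℝ)) =
          (α + ((t:ℝ)+1)) * ∏ i ∈ Finset.range (m+1), (α + ((t + 1 + 1 + i : ℕ) : ℝ)) := by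
        rw [Finset.prod_range_succ']
        rw [Finset.prod_congr rfl (fun i _ => by rw [(by omega : t + 1 + (i+1) = t + 1 + 1 + i)])]
        push_cast; ring
      have hP2 : ∏ i ∈ Finset.range (m+2), (α + ((t + 1 + 1 + i : ℕ) : ℝ)) =
          ((∏ i ∈ Finset.range m, (α + ((t + 1 + 1 + i : ℕ) : ℝ))) * (α + ((t:ℝ) + (m:ℝ) + 2)))
            * (α + ((t:ℝ) + (m:ℝ) + 3)) := by
        rw [Finset.prod_range_succ, Finset.prod_range_succ]; push_cast; ring
      have hP1 : ∏ i ∈ Finset.range (m+1), (α + ((t + 1 + 1 + i : ℕ) : ℝ)) =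
          (∏ i ∈ Finset.range m, (α + ((t + 1 + 1 + i : ℕ) : ℝ))) * (α + ((t:ℝ) + (m:ℝ) + 2)) := by
        rw [Finset.prod_range_succ]; push_cast; ring
      rw [hB, hP2, hP1]
      have hfac2 : ((Nat.factorial (m+2) : ℕ) : ℝ)
          = ((m:ℝ)+2) * (((m:ℝ)+1) * (Nat.factorial m : ℝ)) := by
        rw [Nat.factorial_succ, Nat.factorial_succ]; push_cast; ring
      have hfac1 : ((Nat.factorial (m+1) : ℕ) : ℝ) = ((m:ℝ)+1) * (Nat.factorial m : ℝ) := by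
        rw [Nat.factorial_succ]; push_cast; ring
      have hfact : ((Nat.factorial (t+1) : ℕ) : ℝ) = ((t:ℝ)+1) * (Nat.factorial t : ℝ) := by
        rw [Nat.factorial_succ]; push_cast; ring
      have h1 : ((-1:ℝ))^(t+1) = -(-1:ℝ)^t := by ring
      rw [hfac2, hfac1, hfact, h1]
      have hm0 : ((Nat.factorial m : ℕ):ℝ) ≠ 0 := by positivity
      have ht0 : ((Nat.factorial t : ℕ):ℝ) ≠ 0 := by positivity
      push_cast
      field_simp
      ring

lemma lag_rec (α x : ℝ) (n : ℕ) :
    ((n:ℝ)+2) * laguerreL α (n+2) x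
      = (2*(n:ℝ)+3+α-x) * laguerreL α (n+1) x - ((n:ℝ)+1+α) * laguerreL α n x := by
  have hx : x * laguerreL α (n+1) x
      = ∑ k ∈ range (n+3), (if k = 0 then 0 else Lcoef α (n+1) (k-1)) * x ^ k := by
    rw [lag_eq_sum α x (n+1) (n+2) (by omega), Finset.mul_sum]
    conv_rhs => rw [Finset.sum_range_succ']
    rw [if_pos rfl, zero_mul, add_zero]
    apply Finset.sum_congr rfl
    intro i _
    rw [if_neg (Nat.succ_ne_zero i), Nat.add_sub_cancel]
    ring
  have key : (∑ k ∈ range (n+3), (((n:ℝ)+2) * Lcoef α (n+2) k) * x ^ k)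
      + (∑ k ∈ range (n+3), (if k = 0 then 0 else Lcoef α (n+1) (k-1)) * x ^ k)
      + (∑ k ∈ range (n+3), (((n:ℝ)+1+α) * Lcoef α n k) * x ^ k)
      = ∑ k ∈ range (n+3), ((2*(n:ℝ)+3+α) * Lcoef α (n+1) k) * x ^ k := by
    rw [← Finset.sum_add_distrib, ← Finset.sum_add_distrib]
    apply Finset.sum_congr rfl
    intro k _
    rw [← add_mul, ← add_mul, coef_rec]
  have e2 : ∑ k ∈ range (n+3), (((n:ℝ)+2) * Lcoef α (n+2) k) * x ^ k
      = ((n:ℝ)+2) * laguerreL α (n+2) x := by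
    rw [lag_eq_sum α x (n+2) (n+3) (by omega), Finset.mul_sum]
    exact Finset.sum_congr rfl (fun k _ => by ring)
  have e1 : ∑ k ∈ range (n+3), ((2*(n:ℝ)+3+α) * Lcoef α (n+1) k) * x ^ k
      = (2*(n:ℝ)+3+α) * laguerreL α (n+1) x := by
    rw [lag_eq_sum α x (n+1) (n+3) (by omega), Finset.mul_sum]
    exact Finset.sum_congr rfl (fun k _ => by ring)
  have e0 : ∑ k ∈ range (n+3), (((n:ℝ)+1+α) * Lcoef α n k) * x ^ k
      = ((n:ℝ)+1+α) * laguerreL α n x := by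
    rw [lag_eq_sum α x n (n+3) (by omega), Finset.mul_sum]
    exact Finset.sum_congr rfl (fun k _ => by ring)
  rw [e2, e1, e0, ← hx] at key
  linear_combination key

lemma lag_param (β x : ℝ) (n : ℕ) :
    laguerreL (β+1) (n+1) x = laguerreL (β+1) n x + laguerreL β (n+1) x := by
  rw [lag_eq_sum (β+1) x (n+1) (n+2) (by omega), lag_eq_sum (β+1) x n (n+2) (by omega),
    lag_eq_sum β x (n+1) (n+2) (by omega), ← Finset.sum_add_distrib]
  apply Finset.sum_congr rfl
  intro k hk
  rw [← add_mul]
  congr 1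
  rcases Nat.lt_or_ge n k with h | h
  · -- k = n+1
    have hk1 : k = n + 1 := by rw [Finset.mem_range] at hk; omega
    subst hk1
    simp only [Lcoef]
    split_ifs <;> first | omega | contradiction | skip
    rw [(by omega : n + 1 - (n+1) = 0), Finset.Icc_eq_empty_of_lt (by omega : n+1 < n+1+1),
      Finset.prod_empty]
    ring
  · obtain ⟨m, hm⟩ : ∃ m, n = m + k := ⟨n - k, by omega⟩
    subst hm
    simp only [Lcoef]
    split_ifs <;> first | omega | contradiction | skip
    rw [(by omega : m + k + 1 - k = m + 1), (by omega : m + k - k = m),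
      prod_Icc_to_range (β+1) k (m+k+1), prod_Icc_to_range (β+1) k (m+k),
      prod_Icc_to_range β k (m+k+1),
      (by omega : m + k + 1 - k = m + 1), (by omega : m + k - k = m)]
    have hB : ∏ i ∈ Finset.range (m+1), (β + ((k + 1 + i : ℕ) : ℝ)) =
        (β + ((k:ℝ)+1)) * ∏ i ∈ Finset.range m, ((β+1) + ((k + 1 + i : ℕ) : ℝ)) := by
      rw [Finset.prod_range_succ']
      rw [Finset.prod_congr rfl (fun i _ => by
        rw [(by omega : k + 1 + (i+1) = (k + 1 + i) + 1)] : ∀ i ∈ Finset.range m, _)]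
      push_cast; ring
    have hP1 : ∏ i ∈ Finset.range (m+1), ((β+1) + ((k + 1 + i : ℕ) : ℝ)) =
        (∏ i ∈ Finset.range m, ((β+1) + ((k + 1 + i : ℕ) : ℝ))) * ((β+1) + ((k:ℝ) + (m:ℝ) + 1)) := by
      rw [Finset.prod_range_succ]; push_cast; ring
    rw [hB, hP1]
    have hfac1 : ((Nat.factorial (m+1) : ℕ) : ℝ) = ((m:ℝ)+1) * (Nat.factorial m : ℝ) := by
      rw [Nat.factorial_succ]; push_cast; ring
    rw [hfac1]
    have hm0 : ((Nat.factorial m : ℕ):ℝ) ≠ 0 := by positivity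
    field_simp
    ring

lemma lag0 (α x : ℝ) : laguerreL α 0 x = 1 := by simp [laguerreL]

lemma lag1 (α x : ℝ) : laguerreL α 1 x = α + 1 - x := by
  simp [laguerreL, Finset.sum_range_succ]
  ring

lemma lag2 (α x : ℝ) : laguerreL α 2 x = (α+1)*(α+2)/2 - (α+2)*x + x^2/2 := by
  have h1 : Finset.Icc 1 2 = ({1, 2} : Finset ℕ) := by decide
  have h2 : Finset.Icc 2 2 = ({2} : Finset ℕ) := by decide
  have h3 : Finset.Icc 3 2 = (∅ : Finset ℕ) := by decide
  simp [laguerreL, Finset.sum_range_succ, h1, h2, h3, Nat.factorial]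
  norm_num
  ring

lemma lag_pos' (β x : ℝ) (hβ : -1 < β) (hx : x ≤ 0) (n : ℕ) : 0 < laguerreL β n x := by
  rw [laguerreL]
  have hterm : ∀ k ∈ range (n+1), 0 ≤ (-1 : ℝ) ^ k / (Nat.factorial k : ℝ) *
      ((∏ j ∈ Finset.Icc (k + 1) n, (β + (j : ℝ))) / (Nat.factorial (n - k) : ℝ)) * x ^ k := by
    intro k _
    have h1 : (0:ℝ) ≤ (-1:ℝ)^k * x^k := by
      rw [← neg_pow]
      exact pow_nonneg (by linarith) k
    have h2 : (0:ℝ) < ∏ j ∈ Finset.Icc (k + 1) n, (β + (j : ℝ)) := by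
      apply Finset.prod_pos
      intro j hj
      rw [Finset.mem_Icc] at hj
      have : (1:ℝ) ≤ (j:ℝ) := by exact_mod_cast Nat.one_le_iff_ne_zero.mpr (by omega)
      linarith
    have h3 : (0:ℝ) < (Nat.factorial k : ℝ) := by positivity
    have h4 : (0:ℝ) < (Nat.factorial (n-k) : ℝ) := by positivity
    calc (0:ℝ) ≤ ((-1:ℝ)^k * x^k) * ((∏ j ∈ Finset.Icc (k + 1) n, (β + (j : ℝ))) / ((Nat.factorial k : ℝ) * (Nat.factorial (n - k) : ℝ))) := by positivity
      _ = _ := by field_simp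
  apply Finset.sum_pos' hterm
  refine ⟨0, Finset.mem_range.mpr (by omega), ?_⟩
  simp only [pow_zero, Nat.factorial_zero, Nat.cast_one, Nat.sub_zero, one_mul, mul_one]
  have h2 : (0:ℝ) < ∏ j ∈ Finset.Icc 1 n, (β + (j : ℝ)) := by
    apply Finset.prod_pos
    intro j hj
    rw [Finset.mem_Icc] at hj
    have : (1:ℝ) ≤ (j:ℝ) := by exact_mod_cast hj.1
    linarith
  positivity


lemma turan (α x : ℝ) (hα : 0 < α) (hx : x ≤ 0) :
    ∀ n : ℕ, laguerreL α (n+2) x * laguerreL α n x < laguerreL α (n+1) x ^ 2 := by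
  intro n
  induction n with
  | zero =>
    rw [lag0, lag1, lag2]
    nlinarith [sq_nonneg (α - x), mul_nonneg hα.le (neg_nonneg.mpr hx)]
  | succ j ih =>
    have h1 := lag_rec α x (j+1)
    have h2 := lag_rec α x j
    set L0 := laguerreL α j x
    set L1 := laguerreL α (j+1) x
    set L2 := laguerreL α (j+2) x
    set L3 := laguerreL α (j+3) x
    have key : ((j:ℝ)+3) * (L2^2 - L3*L1)
        = ((j:ℝ)+1+α) * (L1^2 - L2*L0) + (L2 - L1)^2 := by
      have h1' : ((j:ℝ)+1+2) * L3 = (2*((j:ℝ)+1)+3+α-x) * L2 - ((j:ℝ)+1+1+α) * L1 := by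
        have := h1
        push_cast at this ⊢
        convert this using 2 <;> push_cast <;> ring
      linear_combination (-L1) * h1' + L2 * h2
    nlinarith [sq_nonneg (L2 - L1)]

lemma X1_one (α x : ℝ) : X1laguerreL α 1 x = -(x + α + 1) := by
  simp [X1laguerreL, lag0]

lemma X1_two (α x : ℝ) (j : ℕ) : X1laguerreL α (j+2) x
    = -(x + α + 1) * laguerreL α (j+1) x + laguerreL α j x := by
  rw [X1laguerreL, if_pos (by omega)]
  norm_num

lemma lag_cont (α : ℝ) (n : ℕ) : Continuous (fun x => laguerreL α n x) := by
  unfold laguerreL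
  apply continuous_finset_sum
  intro k _
  fun_prop

lemma X1_cont (α : ℝ) (m : ℕ) : Continuous (fun x => X1laguerreL α m x) := by
  unfold X1laguerreL
  apply Continuous.add
  · exact ((by fun_prop : Continuous fun x : ℝ => -(x+α+1))).mul (lag_cont α (m-1))
  · split_ifs
    · exact lag_cont α (m-2)
    · exact continuous_const


-- positivity of X1 on (-∞, -(α+1)]
lemma X1_pos_left (α : ℝ) (hα : 0 < α) (j : ℕ) (x : ℝ) (hx : x ≤ -(α+1)) :
    0 < X1laguerreL α (j+2) x := by
  rw [X1_two]
  have hx0 : x ≤ 0 := by linarith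
  have h1 := lag_pos' α x (by linarith) hx0 (j+1)
  have h2 := lag_pos' α x (by linarith) hx0 j
  nlinarith [mul_nonneg (by linarith : (0:ℝ) ≤ -(x+α+1)) h1.le]

-- negativity at -α
lemma X1_neg_at (α : ℝ) (hα : 0 < α) (m : ℕ) (hm : 1 ≤ m) : X1laguerreL α m (-α) < 0 := by
  rcases Nat.lt_or_ge m 2 with h | h
  · have hm1 : m = 1 := by omega
    subst hm1
    rw [X1_one]
    linarith
  · obtain ⟨j, rfl⟩ : ∃ j, m = j + 2 := ⟨m - 2, by omega⟩
    rw [X1_two]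
    have hp := lag_param (α - 1) (-α) j
    rw [(by ring : α - 1 + 1 = α)] at hp
    have hpos := lag_pos' (α-1) (-α) (by linarith) (by linarith) (j+1)
    nlinarith

/-- For `α > 0`, the sequence of exceptional zeros of the X₁-Laguerre
polynomials is strictly increasing and bounded above by `-α`:
`x̂_{n,1} < x̂_{n+1,1} < -α` for every `n ≥ 1`, with `x̂_{1,1} = -(α+1)`. -/
theorem X1laguerre_exceptional_zeros_strict_increasing
    (α : ℝ) (hα : 0 < α) (z : ℕ → ℕ → ℝ)
    (hz : ∀ n : ℕ, 1 ≤ n → EnumZeros (X1laguerreL α n) n (z n)) :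
    z 1 1 = -(α + 1) ∧
      ∀ n : ℕ, 1 ≤ n → z n 1 < z (n + 1) 1 ∧ z (n + 1) 1 < -α := by
  have hzero : ∀ m, 1 ≤ m → X1laguerreL α m (z m 1) = 0 :=
    fun m hm => ((hz m hm).2 _).mpr ⟨1, le_rfl, hm, rfl⟩
  have hmin : ∀ m, 1 ≤ m → ∀ y, X1laguerreL α m y = 0 → z m 1 ≤ y := by
    intro m hm y hy
    obtain ⟨k, hk1, hkm, rfl⟩ := ((hz m hm).2 y).mp hy
    rcases eq_or_lt_of_le hk1 with h | h
    · exact le_of_eq (congrArg (z m) h)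
    · exact ((hz m hm).1 ⟨le_rfl, hm⟩ ⟨hk1, hkm⟩ h).le
  have hz11 : z 1 1 = -(α+1) := by
    have h := hzero 1 le_rfl
    rw [X1_one] at h
    linarith
  have hlt : ∀ m, 2 ≤ m → z m 1 < -α := by
    intro m hm
    obtain ⟨j, rfl⟩ : ∃ j, m = j + 2 := ⟨m - 2, by omega⟩
    have hab : -(α+1) ≤ -α := by linarith
    have hcont := (X1_cont α (j+2)).continuousOn (s := Set.Icc (-(α+1)) (-α))
    have hsub := intermediate_value_Ioo' hab hcont
    have hmem : (0:ℝ) ∈ Set.Ioo (X1laguerreL α (j+2) (-α)) (X1laguerreL α (j+2) (-(α+1))) :=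
      ⟨X1_neg_at α hα (j+2) (by omega), X1_pos_left α hα j _ le_rfl⟩
    obtain ⟨c, hc, hc0⟩ := hsub hmem
    exact lt_of_le_of_lt (hmin (j+2) (by omega) c hc0) hc.2
  have hnonneg : ∀ m, 1 ≤ m → ∀ x, x ≤ z m 1 → 0 ≤ X1laguerreL α m x := by
    intro m hm x hx
    rcases Nat.lt_or_ge m 2 with h2 | h2
    · have hm1 : m = 1 := by omega
      subst hm1
      rw [X1_one]
      rw [hz11] at hx
      linarith
    · obtain ⟨j, rfl⟩ : ∃ j, m = j + 2 := ⟨m - 2, by omega⟩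
      rcases le_or_gt x (-(α+1)) with hxa | hxa
      · exact (X1_pos_left α hα j x hxa).le
      · rcases eq_or_lt_of_le hx with heq | hxlt
        · rw [heq, hzero (j+2) (by omega)]
        · by_contra hneg
          push_neg at hneg
          have hcont := (X1_cont α (j+2)).continuousOn (s := Set.Icc (-(α+1)) x)
          have hsub := intermediate_value_Ioo' hxa.le hcont
          have hmem : (0:ℝ) ∈ Set.Ioo (X1laguerreL α (j+2) x) (X1laguerreL α (j+2) (-(α+1))) :=
            ⟨hneg, X1_pos_left α hα j _ le_rfl⟩
          obtain ⟨c, hc, hc0⟩ := hsub hmem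
          have := hmin (j+2) (by omega) c hc0
          linarith [hc.2]
  have hstep : ∀ m, 1 ≤ m → ∀ x, x ≤ z m 1 → 0 < X1laguerreL α (m+1) x := by
    intro m hm x hx
    rcases Nat.lt_or_ge m 2 with h2 | h2
    · have hm1 : m = 1 := by omega
      subst hm1
      rw [hz11] at hx
      rw [(rfl : (1+1 : ℕ) = 0+2), X1_two, lag1, lag0]
      nlinarith
    · obtain ⟨j, rfl⟩ : ∃ j, m = j + 2 := ⟨m - 2, by omega⟩
      have hx0 : x ≤ 0 := by
        have := hlt (j+2) (by omega)
        linarith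
      have hnn := hnonneg (j+2) (by omega) x hx
      rw [X1_two] at hnn
      rw [(by omega : j+2+1 = (j+1)+2), X1_two]
      have hLj := lag_pos' α x (by linarith) hx0 j
      have hLj1 := lag_pos' α x (by linarith) hx0 (j+1)
      have hLj2 := lag_pos' α x (by linarith) hx0 (j+2)
      have htu := turan α x hα hx0 j
      nlinarith [mul_nonneg hnn hLj2.le]
  refine ⟨hz11, fun n hn => ⟨?_, hlt (n+1) (by omega)⟩⟩
  by_contra h
  push_neg at h
  have hpos := hstep n hn (z (n+1) 1) h
  rw [hzero (n+1) (by omega)] at hpos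
  exact lt_irrefl 0 hpos
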